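/- Let (G,d) be a complete p-uniformly convex space with constant c > 0. For any points x₁,…,xₙ ∈ G and weights ω₁,…,ωₙ ∈ [0,1] summing to 1, the function y ↦ Σᵢ ωᵢ d(y,xᵢ)^p attains a unique minimizer in G (the p-barycenter exists and is unique). -/

import Mathlib

open Set Finset

/-- In a complete p-uniformly convex space, the p-barycenter of finitely many points
with weights in `[0,1]` summing to `1` exists and is unique. -/
theorem p_barycenter_exists_unique {G : Type*} [MetricSpace G] [CompleteSpace G]
    (p c : ℝ) (hp : 1 < p) (hc : 0 < c)
    (mix : G → G → ℝ → G)
    (hmix0 : ∀ x y : G, mix x y 0 = x) (hmix1 : ∀ x y : G, mix x y 1 = y)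
    (hcvx : ∀ t ∈ Icc (0:ℝ) 1, ∀ x y z : G,
      dist z (mix x y t) ^ p ≤ (1 - t) * dist z x ^ p + t * dist z y ^ p
        - c / 2 * t * (1 - t) * dist x y ^ p)
    (n : ℕ) (x : Fin n → G) (ω : Fin n → ℝ)
    (hω : ∀ i, ω i ∈ Icc (0:ℝ) 1) (hsum : ∑ i, ω i = 1) :
    ∃! y : G, ∀ z : G,
      ∑ i, ω i * dist y (x i) ^ p ≤ ∑ i, ω i * dist z (x i) ^ p := by
  classical
  have hp0 : (0:ℝ) < p := lt_trans one_pos hp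
  have hn : 0 < n := by
    rcases Nat.eq_zero_or_pos n with h | h
    · subst h; simp at hsum
    · exact h
  have : Nonempty G := ⟨x ⟨0, hn⟩⟩
  set f : G → ℝ := fun y => ∑ i, ω i * dist y (x i) ^ p with hf
  have hf_nonneg : ∀ y, 0 ≤ f y := fun y => Finset.sum_nonneg fun i _ =>
    mul_nonneg (hω i).1 (Real.rpow_nonneg dist_nonneg p)
  have hbdd : BddBelow (Set.range f) := ⟨0, by rintro _ ⟨y, rfl⟩; exact hf_nonneg y⟩
  have hne : (Set.range f).Nonempty := Set.range_nonempty f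
  -- midpoint inequality
  have hmid : ∀ y z : G, f (mix y z (1/2)) ≤ f y / 2 + f z / 2 - c/8 * dist y z ^ p := by
    intro y z
    have key : ∀ i : Fin n, ω i * dist (mix y z (1/2)) (x i) ^ p ≤
        (ω i * dist y (x i) ^ p) / 2 + (ω i * dist z (x i) ^ p) / 2
          - (c/8 * dist y z ^ p) * ω i := by
      intro i
      have h := hcvx (1/2) (by norm_num) y z (x i)
      rw [dist_comm (mix y z (1/2)) (x i), dist_comm y (x i), dist_comm z (x i)]
      have h2 : dist (x i) (mix y z (1/2)) ^ p ≤
          dist (x i) y ^ p / 2 + dist (x i) z ^ p / 2 - c/8 * dist y z ^ p := by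
        calc dist (x i) (mix y z (1/2)) ^ p
            ≤ (1 - 1/2) * dist (x i) y ^ p + (1/2) * dist (x i) z ^ p
              - c / 2 * (1/2) * (1 - 1/2) * dist y z ^ p := h
          _ = dist (x i) y ^ p / 2 + dist (x i) z ^ p / 2 - c/8 * dist y z ^ p := by ring
      have h3 := mul_le_mul_of_nonneg_left h2 (hω i).1
      calc ω i * dist (x i) (mix y z (1/2)) ^ p
          ≤ ω i * (dist (x i) y ^ p / 2 + dist (x i) z ^ p / 2 - c/8 * dist y z ^ p) := h3
        _ = (ω i * dist (x i) y ^ p) / 2 + (ω i * dist (x i) z ^ p) / 2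
            - (c/8 * dist y z ^ p) * ω i := by ring
    calc f (mix y z (1/2))
        ≤ ∑ i, ((ω i * dist y (x i) ^ p) / 2 + (ω i * dist z (x i) ^ p) / 2
            - (c/8 * dist y z ^ p) * ω i) := Finset.sum_le_sum fun i _ => key i
      _ = (∑ i, ω i * dist y (x i) ^ p) / 2 + (∑ i, ω i * dist z (x i) ^ p) / 2
            - (c/8 * dist y z ^ p) * ∑ i, ω i := by
          rw [Finset.sum_sub_distrib, Finset.sum_add_distrib, ← Finset.sum_div,
            ← Finset.sum_div, ← Finset.mul_sum]
      _ = f y / 2 + f z / 2 - c/8 * dist y z ^ p := by rw [hsum]; ring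
  -- continuity of f
  have hfc : Continuous f := by
    apply continuous_finset_sum
    intro i _
    exact continuous_const.mul
      ((continuous_id.dist continuous_const).rpow_const fun y => Or.inr hp0.le)
  set m : ℝ := sInf (Set.range f) with hm
  have hmle : ∀ y : G, m ≤ f y := fun y => csInf_le hbdd ⟨y, rfl⟩
  -- minimizing sequence
  have hseq : ∀ k : ℕ, ∃ y : G, f y < m + 1/(k+1) := by
    intro k
    obtain ⟨a, ⟨y, rfl⟩, ha⟩ := Real.lt_sInf_add_pos hne
      (show (0:ℝ) < 1/(k+1) by positivity)
    exact ⟨y, ha⟩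
  choose u hu using hseq
  -- Cauchy
  have key2 : ∀ k l N : ℕ, N ≤ k → N ≤ l →
      c/8 * dist (u k) (u l) ^ p ≤ 1/(N+1) := by
    intro k l N hk hl
    have h1 : m ≤ f (mix (u k) (u l) (1/2)) := hmle _
    have h2 := hmid (u k) (u l)
    have h3 : f (u k) < m + 1/(N+1) :=
      (hu k).trans_le (by gcongr <;> exact_mod_cast hk)
    have h4 : f (u l) < m + 1/(N+1) :=
      (hu l).trans_le (by gcongr <;> exact_mod_cast hl)
    nlinarith
  have hcauchy : CauchySeq u := by
    refine cauchySeq_of_le_tendsto_0 (fun N => (8/c * (1/(N+1))) ^ p⁻¹) ?_ ?_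
    · intro k l N hk hl
      have h := key2 k l N hk hl
      have hd : dist (u k) (u l) ^ p ≤ 8/c * (1/(N+1)) := by
        rw [div_mul_eq_mul_div, le_div_iff₀ hc]
        nlinarith
      calc dist (u k) (u l) = (dist (u k) (u l) ^ p) ^ p⁻¹ :=
            (Real.rpow_rpow_inv dist_nonneg hp0.ne').symm
        _ ≤ (8/c * (1/(N+1))) ^ p⁻¹ :=
            Real.rpow_le_rpow (Real.rpow_nonneg dist_nonneg p) hd (by positivity)
    · have h1 : Filter.Tendsto (fun N : ℕ => 8/c * (1/(N+1:ℝ))) Filter.atTop (nhds 0) := by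
        have : Filter.Tendsto (fun n : ℕ => 1 / ((n : ℝ) + 1)) Filter.atTop (nhds 0) :=
          tendsto_one_div_add_atTop_nhds_zero_nat
        have := this.const_mul (8/c)
        simpa using this
      have h2 : ContinuousAt (fun t : ℝ => t ^ p⁻¹) 0 :=
        Real.continuousAt_rpow_const 0 p⁻¹ (Or.inr (by positivity))
      have := h2.tendsto.comp h1
      simpa [Function.comp_def, Real.zero_rpow (by positivity : p⁻¹ ≠ 0)] using this
  obtain ⟨y₀, hy₀⟩ := cauchySeq_tendsto_of_complete hcauchy
  -- f y₀ = m
  have hfu : Filter.Tendsto (fun k => f (u k)) Filter.atTop (nhds m) := by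
    apply tendsto_of_tendsto_of_tendsto_of_le_of_le (g := fun _ => m)
      (h := fun k : ℕ => m + 1/(k+1)) tendsto_const_nhds
    · have := tendsto_const_nhds (x := m) (f := Filter.atTop (α := ℕ))
      have h2 := this.add tendsto_one_div_add_atTop_nhds_zero_nat
      simpa using h2
    · exact fun k => hmle (u k)
    · exact fun k => (hu k).le
  have hfy₀ : f y₀ = m :=
    tendsto_nhds_unique ((hfc.tendsto y₀).comp hy₀) hfu
  refine ⟨y₀, fun z => ?_, fun z hz => ?_⟩
  · show f y₀ ≤ f z
    rw [hfy₀]; exact hmle z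
  · -- uniqueness
    have h1 : f z ≤ f y₀ := hz y₀
    have h2 : f y₀ ≤ f z := by rw [hfy₀]; exact hmle z
    have h3 : f z ≤ f (mix z y₀ (1/2)) := hz _
    have h4 := hmid z y₀
    have h5 : c/8 * dist z y₀ ^ p ≤ 0 := by nlinarith
    have h6 : dist z y₀ ^ p = 0 :=
      le_antisymm (by nlinarith) (Real.rpow_nonneg dist_nonneg p)
    have h7 : dist z y₀ = 0 := by
      rwa [Real.rpow_eq_zero dist_nonneg hp0.ne'] at h6
    exact dist_eq_zero.mp h7
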